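/- Let d ≥ 2 be an integer and λ ≥ λ̂ := (d+1)b_d/(4 b_{d−1}). Then inf_{χ ∈ Γ_{ς,ς}} ∫_{[0,π/2]²} K_λ^d(φ, ψ) dχ(φ, ψ) = m_d − λ. -/

import Mathlib

open MeasureTheory Real Set

noncomputable section

/-- `b d` is the volume of the unit ball in `ℝ^d`. -/
def ballVol (d : ℕ) : ℝ := Real.pi ^ ((d : ℝ) / 2) / Real.Gamma ((d : ℝ) / 2 + 1)

/-- `K_λ^d(φ,ψ)`: the infimum of
`(d+1)/4 · |v₁+v₂|²/2 + λ((b_{d−1}/b_d)|n₁−n₂| − 1)` over unit vectors with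
`⟨v₁,n₁⟩ = cos φ` and `⟨v₂,n₂⟩ = cos ψ`. -/
def Kfun (d : ℕ) (lam φ ψ : ℝ) : ℝ :=
  sInf {r : ℝ | ∃ v₁ n₁ v₂ n₂ : EuclideanSpace ℝ (Fin d),
    ‖v₁‖ = 1 ∧ ‖n₁‖ = 1 ∧ ‖v₂‖ = 1 ∧ ‖n₂‖ = 1 ∧
    (inner ℝ v₁ n₁ : ℝ) = Real.cos φ ∧ (inner ℝ v₂ n₂ : ℝ) = Real.cos ψ ∧
    r = ((d : ℝ) + 1) / 4 * (‖v₁ + v₂‖ ^ 2 / 2) +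
        lam * (ballVol (d - 1) / ballVol d * ‖n₁ - n₂‖ - 1)}

/-- The measure `ς_d` on `[0, π/2]` with density `(d−1) sin^{d−2}φ cos φ`. -/
def sigmaMeasure (d : ℕ) : Measure ℝ :=
  (volume.restrict (Set.Icc 0 (Real.pi / 2))).withDensity fun φ =>
    ENNReal.ofReal (((d : ℝ) - 1) * Real.sin φ ^ (d - 2) * Real.cos φ)

/-- `Γ_{ς,ς}`: measures on the square whose marginals equal `ς_d`. -/
def GammaSigmaSigma (d : ℕ) : Set (Measure (ℝ × ℝ)) :=
  {χ | χ.map Prod.fst = sigmaMeasure d ∧ χ.map Prod.snd = sigmaMeasure d}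

/-- `m_d = (d+1)/4 · inf_{χ ∈ Γ_{ς,ς}} ∫ (1 + cos(φ+ψ)) dχ`. -/
def mConst (d : ℕ) : ℝ :=
  ((d : ℝ) + 1) / 4 *
    sInf {r : ℝ | ∃ χ ∈ GammaSigmaSigma d, r = ∫ p, (1 + Real.cos (p.1 + p.2)) ∂χ}

end


noncomputable section StmtHelpers

variable {E : Type*} [NormedAddCommGroup E] [InnerProductSpace ℝ E]

/-- Lemma A: decomposition along a unit vector. -/
lemma lemA (u w m : E) (hu : ‖u‖ = 1) (hw : ‖w‖ = 1) (hm : ‖m‖ = 1) :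
    (inner ℝ u m : ℝ) * inner ℝ w m -
      Real.sqrt (1 - (inner ℝ u m : ℝ) ^ 2) * Real.sqrt (1 - (inner ℝ w m : ℝ) ^ 2)
      ≤ (inner ℝ u w : ℝ) := by
  have hmm : (inner ℝ m m : ℝ) = 1 := by
    rw [real_inner_self_eq_norm_sq, hm]; norm_num
  have hpq : (inner ℝ (u - (inner ℝ u m : ℝ) • m) (w - (inner ℝ w m : ℝ) • m) : ℝ)
      = (inner ℝ u w : ℝ) - (inner ℝ u m : ℝ) * (inner ℝ w m : ℝ) := by
    simp only [inner_sub_left, inner_sub_right, real_inner_smul_left,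
      real_inner_smul_right, hmm]
    rw [real_inner_comm m w, real_inner_comm m u]
    ring
  have hpn : ‖u - (inner ℝ u m : ℝ) • m‖ ^ 2 = 1 - (inner ℝ u m : ℝ) ^ 2 := by
    rw [norm_sub_sq_real, hu, real_inner_smul_right, norm_smul,
      Real.norm_eq_abs, hm, mul_one, sq_abs]
    ring
  have hqn : ‖w - (inner ℝ w m : ℝ) • m‖ ^ 2 = 1 - (inner ℝ w m : ℝ) ^ 2 := by
    rw [norm_sub_sq_real, hw, real_inner_smul_right, norm_smul,
      Real.norm_eq_abs, hm, mul_one, sq_abs]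
    ring
  have h1 : ‖u - (inner ℝ u m : ℝ) • m‖ = Real.sqrt (1 - (inner ℝ u m : ℝ) ^ 2) := by
    rw [← hpn, Real.sqrt_sq (norm_nonneg _)]
  have h2 : ‖w - (inner ℝ w m : ℝ) • m‖ = Real.sqrt (1 - (inner ℝ w m : ℝ) ^ 2) := by
    rw [← hqn, Real.sqrt_sq (norm_nonneg _)]
  have h3 := abs_real_inner_le_norm (u - (inner ℝ u m : ℝ) • m) (w - (inner ℝ w m : ℝ) • m)
  have h4 := neg_abs_le (inner ℝ (u - (inner ℝ u m : ℝ) • m) (w - (inner ℝ w m : ℝ) • m) : ℝ)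
  rw [h1, h2] at h3
  rw [hpq] at h3 h4
  linarith [abs_nonneg ((inner ℝ u w : ℝ) - (inner ℝ u m : ℝ) * (inner ℝ w m : ℝ))]

set_option maxHeartbeats 1000000 in
/-- Key inequality: `⟨v₁,v₂⟩ + ‖n₁ − n₂‖ ≥ cos(φ+ψ)`. -/
lemma keyIneq (v₁ n₁ v₂ n₂ : E) (hv₁ : ‖v₁‖ = 1) (hn₁ : ‖n₁‖ = 1)
    (hv₂ : ‖v₂‖ = 1) (hn₂ : ‖n₂‖ = 1) (φ ψ : ℝ)
    (hφ : φ ∈ Icc 0 (π / 2)) (hψ : ψ ∈ Icc 0 (π / 2))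
    (h1 : (inner ℝ v₁ n₁ : ℝ) = Real.cos φ) (h2 : (inner ℝ v₂ n₂ : ℝ) = Real.cos ψ) :
    Real.cos (φ + ψ) ≤ (inner ℝ v₁ v₂ : ℝ) + ‖n₁ - n₂‖ := by
  obtain ⟨hφ0, hφ2⟩ := hφ
  obtain ⟨hψ0, hψ2⟩ := hψ
  have pi_pos := Real.pi_pos
  -- angle between n₁ n₂
  have hnn_le : |(inner ℝ n₁ n₂ : ℝ)| ≤ 1 := by
    have := abs_real_inner_le_norm n₁ n₂; rw [hn₁, hn₂] at this; linarith
  set θ : ℝ := Real.arccos (inner ℝ n₁ n₂ : ℝ) with hθdef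
  have hθ0 : 0 ≤ θ := Real.arccos_nonneg _
  have hθpi : θ ≤ π := Real.arccos_le_pi _
  have hcosθ : Real.cos θ = (inner ℝ n₁ n₂ : ℝ) :=
    Real.cos_arccos (neg_le_of_abs_le hnn_le) (le_of_abs_le hnn_le)
  -- ‖n₁ - n₂‖ = 2 sin (θ/2)
  have hsinθ2 : Real.sin (θ / 2) ≥ 0 :=
    Real.sin_nonneg_of_nonneg_of_le_pi (by linarith) (by linarith)
  have hδ : ‖n₁ - n₂‖ = 2 * Real.sin (θ / 2) := by
    have hsq : ‖n₁ - n₂‖ ^ 2 = (2 * Real.sin (θ / 2)) ^ 2 := by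
      rw [norm_sub_sq_real, hn₁, hn₂, ← hcosθ]
      have hc2 : Real.cos θ = 1 - 2 * Real.sin (θ / 2) ^ 2 := by
        have h : Real.cos (2 * (θ / 2)) = 2 * Real.cos (θ / 2) ^ 2 - 1 :=
          Real.cos_two_mul (θ / 2)
        have h2 := Real.sin_sq_add_cos_sq (θ / 2)
        have h3 : 2 * (θ / 2) = θ := by ring
        rw [h3] at h
        nlinarith
      nlinarith
    rw [← Real.sqrt_sq (norm_nonneg (n₁ - n₂)), hsq,
      Real.sqrt_sq (by linarith : (0:ℝ) ≤ 2 * Real.sin (θ / 2))]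
  by_cases hcase : φ + ψ + θ ≤ π
  · -- Case 1
    -- bound x = ⟪v₂,n₁⟫ from below by cos (ψ + θ)
    have hsinψ : Real.sqrt (1 - Real.cos ψ ^ 2) = Real.sin ψ := by
      have h := Real.sin_sq_add_cos_sq ψ
      have : (1 : ℝ) - Real.cos ψ ^ 2 = Real.sin ψ ^ 2 := by linarith
      rw [this, Real.sqrt_sq (Real.sin_nonneg_of_nonneg_of_le_pi hψ0 (by linarith))]
    have hsinφ : Real.sqrt (1 - Real.cos φ ^ 2) = Real.sin φ := by
      have h := Real.sin_sq_add_cos_sq φ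
      have : (1 : ℝ) - Real.cos φ ^ 2 = Real.sin φ ^ 2 := by linarith
      rw [this, Real.sqrt_sq (Real.sin_nonneg_of_nonneg_of_le_pi hφ0 (by linarith))]
    have hsinθ : Real.sqrt (1 - Real.cos θ ^ 2) = Real.sin θ := by
      have h := Real.sin_sq_add_cos_sq θ
      have : (1 : ℝ) - Real.cos θ ^ 2 = Real.sin θ ^ 2 := by linarith
      rw [this, Real.sqrt_sq (Real.sin_nonneg_of_nonneg_of_le_pi hθ0 hθpi)]
    have hA1 := lemA v₂ n₁ n₂ hv₂ hn₁ hn₂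
    rw [h2, ← hcosθ, hsinψ, hsinθ] at hA1
    have hx : Real.cos (ψ + θ) ≤ (inner ℝ v₂ n₁ : ℝ) := by
      rw [Real.cos_add]; linarith
    -- x = cos β with β = arccos x
    have hx_le : |(inner ℝ v₂ n₁ : ℝ)| ≤ 1 := by
      have := abs_real_inner_le_norm v₂ n₁; rw [hv₂, hn₁] at this; linarith
    set β : ℝ := Real.arccos (inner ℝ v₂ n₁ : ℝ) with hβdef
    have hβ0 : 0 ≤ β := Real.arccos_nonneg _
    have hβpi : β ≤ π := Real.arccos_le_pi _
    have hcosβ : Real.cos β = (inner ℝ v₂ n₁ : ℝ) :=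
      Real.cos_arccos (neg_le_of_abs_le hx_le) (le_of_abs_le hx_le)
    have hβle : β ≤ ψ + θ := by
      have harc : Real.arccos (Real.cos (ψ + θ)) = ψ + θ :=
        Real.arccos_cos (by linarith) (by linarith)
      rw [hβdef, ← harc]
      apply Real.strictAntiOn_arccos.antitoneOn
        ⟨Real.neg_one_le_cos _, Real.cos_le_one _⟩
        ⟨neg_le_of_abs_le hx_le, le_of_abs_le hx_le⟩ hx
    -- ⟪v₁,v₂⟫ ≥ cos (φ + β)
    have hA2 := lemA v₁ v₂ n₁ hv₁ hv₂ hn₁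
    rw [h1, hsinφ] at hA2
    have hsinβ : Real.sqrt (1 - Real.cos β ^ 2) = Real.sin β := by
      rw [hcosβ, hβdef, ← Real.sin_arccos]
    rw [← hcosβ] at hA2
    rw [hsinβ] at hA2
    have hc1 : Real.cos (φ + β) ≤ (inner ℝ v₁ v₂ : ℝ) := by
      rw [Real.cos_add]; linarith
    have hc2 : Real.cos (φ + ψ + θ) ≤ Real.cos (φ + β) :=
      Real.cos_le_cos_of_nonneg_of_le_pi (by linarith) hcase (by linarith)
    have hcc := Real.cos_sub_cos (φ + ψ) (φ + ψ + θ)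
    rw [show (φ + ψ - (φ + ψ + θ)) / 2 = -(θ / 2) by ring, Real.sin_neg] at hcc
    have hb := Real.sin_le_one ((φ + ψ + (φ + ψ + θ)) / 2)
    have hprod : 0 ≤ (1 - Real.sin ((φ + ψ + (φ + ψ + θ)) / 2)) * Real.sin (θ / 2) :=
      mul_nonneg (by linarith) hsinθ2
    rw [hδ]
    have hexp : Real.cos (φ + ψ) - Real.cos (φ + ψ + θ)
        ≤ 2 * Real.sin (θ / 2) := by nlinarith [hprod, hcc]
    linarith [hexp, hc1, hc2]
  · -- Case 2
    have h2' : (π - φ - ψ) / 2 ≤ θ / 2 := by linarith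
    have hs : Real.sin ((π - φ - ψ) / 2) ≤ Real.sin (θ / 2) :=
      Real.sin_le_sin_of_le_of_le_pi_div_two (by linarith) (by linarith) h2'
    have hsin_eq : Real.sin ((π - φ - ψ) / 2) = Real.cos ((φ + ψ) / 2) := by
      rw [show (π - φ - ψ) / 2 = π / 2 - (φ + ψ) / 2 by ring, Real.sin_pi_div_two_sub]
    have hcos_half_nonneg : 0 ≤ Real.cos ((φ + ψ) / 2) :=
      Real.cos_nonneg_of_mem_Icc ⟨by linarith, by linarith⟩
    have hcos_half_le : Real.cos ((φ + ψ) / 2) ≤ 1 := Real.cos_le_one _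
    have hdouble : Real.cos (φ + ψ) = 2 * Real.cos ((φ + ψ) / 2) ^ 2 - 1 := by
      have h := Real.cos_two_mul ((φ + ψ) / 2)
      rw [show 2 * ((φ + ψ) / 2) = φ + ψ by ring] at h
      exact h
    have hinner : -1 ≤ (inner ℝ v₁ v₂ : ℝ) := by
      have := abs_real_inner_le_norm v₁ v₂; rw [hv₁, hv₂] at this
      have := neg_abs_le (inner ℝ v₁ v₂ : ℝ); linarith [le_of_abs_le
        (show |(inner ℝ v₁ v₂ : ℝ)| ≤ 1 by
          have h := abs_real_inner_le_norm v₁ v₂; rw [hv₁, hv₂] at h; linarith)]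
    have hcs : Real.cos ((φ + ψ) / 2) ^ 2 ≤ Real.cos ((φ + ψ) / 2) := by
      nlinarith [hcos_half_nonneg, hcos_half_le]
    rw [hδ]
    linarith [hs, hsin_eq ▸ hs]


lemma ballVol_pos (d : ℕ) : 0 < ballVol d := by
  unfold ballVol
  apply div_pos (Real.rpow_pos_of_pos Real.pi_pos _)
  apply Real.Gamma_pos_of_pos
  positivity

-- upper bound witness: explicit vectors
lemma kfun_witness (d : ℕ) (hd : 2 ≤ d) (φ ψ : ℝ) :
    ∃ v₁ n₁ v₂ n₂ : EuclideanSpace ℝ (Fin d),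
      ‖v₁‖ = 1 ∧ ‖n₁‖ = 1 ∧ ‖v₂‖ = 1 ∧ ‖n₂‖ = 1 ∧
      (inner ℝ v₁ n₁ : ℝ) = Real.cos φ ∧ (inner ℝ v₂ n₂ : ℝ) = Real.cos ψ ∧
      (inner ℝ v₁ v₂ : ℝ) = Real.cos (φ + ψ) ∧ n₁ = n₂ := by
  have h0 : (0 : ℕ) < d := by omega
  have h1 : (1 : ℕ) < d := by omega
  set i0 : Fin d := ⟨0, h0⟩
  set i1 : Fin d := ⟨1, h1⟩
  have hne : i0 ≠ i1 := by simp [i0, i1, Fin.ext_iff]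
  set e0 : EuclideanSpace ℝ (Fin d) := EuclideanSpace.single i0 (1 : ℝ)
  set e1 : EuclideanSpace ℝ (Fin d) := EuclideanSpace.single i1 (1 : ℝ)
  have h00 : (inner ℝ e0 e0 : ℝ) = 1 := by
    simp [e0, EuclideanSpace.inner_single_left, EuclideanSpace.single_apply]
  have h11 : (inner ℝ e1 e1 : ℝ) = 1 := by
    simp [e1, EuclideanSpace.inner_single_left, EuclideanSpace.single_apply]
  have h01 : (inner ℝ e0 e1 : ℝ) = 0 := by
    simp only [e0, e1, EuclideanSpace.inner_single_left, EuclideanSpace.single_apply,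
      if_neg hne, map_one, one_mul, mul_zero]
  have h10 : (inner ℝ e1 e0 : ℝ) = 0 := by
    simp only [e0, e1, EuclideanSpace.inner_single_left, EuclideanSpace.single_apply,
      if_neg hne.symm, map_one, one_mul, mul_zero]
  refine ⟨Real.cos φ • e0 + Real.sin φ • e1, e0,
    Real.cos ψ • e0 - Real.sin ψ • e1, e0, ?_, ?_, ?_, ?_, ?_, ?_, ?_, rfl⟩
  · have : ‖Real.cos φ • e0 + Real.sin φ • e1‖ ^ 2 = 1 := by
      rw [← real_inner_self_eq_norm_sq]
      simp only [inner_add_left, inner_add_right, inner_sub_left, inner_sub_right,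
        real_inner_smul_left, real_inner_smul_right, h00, h11, h01, h10]
      nlinarith [Real.sin_sq_add_cos_sq φ]
    nlinarith [norm_nonneg (Real.cos φ • e0 + Real.sin φ • e1)]
  · have : ‖e0‖ ^ 2 = 1 := by rw [← real_inner_self_eq_norm_sq, h00]
    nlinarith [norm_nonneg e0]
  · have : ‖Real.cos ψ • e0 - Real.sin ψ • e1‖ ^ 2 = 1 := by
      rw [← real_inner_self_eq_norm_sq]
      simp only [inner_add_left, inner_add_right, inner_sub_left, inner_sub_right,
        real_inner_smul_left, real_inner_smul_right, h00, h11, h01, h10]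
      nlinarith [Real.sin_sq_add_cos_sq ψ]
    nlinarith [norm_nonneg (Real.cos ψ • e0 - Real.sin ψ • e1)]
  · have : ‖e0‖ ^ 2 = 1 := by rw [← real_inner_self_eq_norm_sq, h00]
    nlinarith [norm_nonneg e0]
  · simp only [inner_add_left, real_inner_smul_left, h00, h10]; ring
  · simp only [inner_sub_left, real_inner_smul_left, h00, h10]; ring
  · simp only [inner_add_left, inner_add_right, inner_sub_left, inner_sub_right,
      real_inner_smul_left, real_inner_smul_right, h00, h11, h01, h10, Real.cos_add]
    ring


lemma Kfun_eq (d : ℕ) (hd : 2 ≤ d) (lam : ℝ)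
    (hlam : ((d : ℝ) + 1) * ballVol d / (4 * ballVol (d - 1)) ≤ lam)
    (φ ψ : ℝ) (hφ : φ ∈ Icc 0 (π / 2)) (hψ : ψ ∈ Icc 0 (π / 2)) :
    Kfun d lam φ ψ = ((d : ℝ) + 1) / 4 * (1 + Real.cos (φ + ψ)) - lam := by
  have hb1 : 0 < ballVol d := ballVol_pos d
  have hb2 : 0 < ballVol (d - 1) := ballVol_pos (d - 1)
  have hκpos : 0 < ballVol (d - 1) / ballVol d := div_pos hb2 hb1
  have hAκ : ((d : ℝ) + 1) / 4 ≤ lam * (ballVol (d - 1) / ballVol d) := by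
    have h := mul_le_mul_of_nonneg_right hlam (le_of_lt hκpos)
    have heq : ((d : ℝ) + 1) * ballVol d / (4 * ballVol (d - 1)) *
        (ballVol (d - 1) / ballVol d) = ((d : ℝ) + 1) / 4 := by
      field_simp
    rwa [heq] at h
  have hApos : (0 : ℝ) < ((d : ℝ) + 1) / 4 := by positivity
  have hlb : ∀ r ∈ {r : ℝ | ∃ v₁ n₁ v₂ n₂ : EuclideanSpace ℝ (Fin d),
      ‖v₁‖ = 1 ∧ ‖n₁‖ = 1 ∧ ‖v₂‖ = 1 ∧ ‖n₂‖ = 1 ∧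
      (inner ℝ v₁ n₁ : ℝ) = Real.cos φ ∧ (inner ℝ v₂ n₂ : ℝ) = Real.cos ψ ∧
      r = ((d : ℝ) + 1) / 4 * (‖v₁ + v₂‖ ^ 2 / 2) +
          lam * (ballVol (d - 1) / ballVol d * ‖n₁ - n₂‖ - 1)},
      ((d : ℝ) + 1) / 4 * (1 + Real.cos (φ + ψ)) - lam ≤ r := by
    rintro r ⟨v₁, n₁, v₂, n₂, hv₁, hn₁, hv₂, hn₂, h1, h2, hr⟩
    have key := keyIneq v₁ n₁ v₂ n₂ hv₁ hn₁ hv₂ hn₂ φ ψ hφ hψ h1 h2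
    have hnorm : ‖v₁ + v₂‖ ^ 2 = 2 + 2 * (inner ℝ v₁ v₂ : ℝ) := by
      rw [norm_add_sq_real, hv₁, hv₂]; ring
    have hδ0 : (0 : ℝ) ≤ ‖n₁ - n₂‖ := norm_nonneg _
    have hstep1 : ((d : ℝ) + 1) / 4 * Real.cos (φ + ψ) ≤
        ((d : ℝ) + 1) / 4 * ((inner ℝ v₁ v₂ : ℝ) + ‖n₁ - n₂‖) :=
      mul_le_mul_of_nonneg_left key (le_of_lt hApos)
    have hstep2 : ((d : ℝ) + 1) / 4 * ‖n₁ - n₂‖ ≤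
        lam * (ballVol (d - 1) / ballVol d) * ‖n₁ - n₂‖ :=
      mul_le_mul_of_nonneg_right hAκ hδ0
    rw [hr, hnorm]
    ring_nf
    ring_nf at hstep1 hstep2 ⊢
    nlinarith [hstep1, hstep2]
  have hmem : ((d : ℝ) + 1) / 4 * (1 + Real.cos (φ + ψ)) - lam ∈
      {r : ℝ | ∃ v₁ n₁ v₂ n₂ : EuclideanSpace ℝ (Fin d),
      ‖v₁‖ = 1 ∧ ‖n₁‖ = 1 ∧ ‖v₂‖ = 1 ∧ ‖n₂‖ = 1 ∧
      (inner ℝ v₁ n₁ : ℝ) = Real.cos φ ∧ (inner ℝ v₂ n₂ : ℝ) = Real.cos ψ ∧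
      r = ((d : ℝ) + 1) / 4 * (‖v₁ + v₂‖ ^ 2 / 2) +
          lam * (ballVol (d - 1) / ballVol d * ‖n₁ - n₂‖ - 1)} := by
    obtain ⟨v₁, n₁, v₂, n₂, hv₁, hn₁, hv₂, hn₂, h1, h2, hvv, hnn⟩ := kfun_witness d hd φ ψ
    refine ⟨v₁, n₁, v₂, n₂, hv₁, hn₁, hv₂, hn₂, h1, h2, ?_⟩
    have hnorm : ‖v₁ + v₂‖ ^ 2 = 2 + 2 * Real.cos (φ + ψ) := by
      rw [norm_add_sq_real, hv₁, hv₂, hvv]; ring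
    rw [hnorm, hnn, sub_self, norm_zero]
    ring
  exact le_antisymm (csInf_le ⟨_, hlb⟩ hmem) (le_csInf ⟨_, hmem⟩ hlb)

lemma sigma_compl (d : ℕ) : sigmaMeasure d (Set.Icc 0 (Real.pi / 2))ᶜ = 0 := by
  rw [sigmaMeasure, withDensity_apply _ measurableSet_Icc.compl,
    Measure.restrict_restrict measurableSet_Icc.compl, compl_inter_self,
    Measure.restrict_empty, lintegral_zero_measure]

lemma sigma_prob (d : ℕ) (hd : 2 ≤ d) : IsProbabilityMeasure (sigmaMeasure d) := by
  constructor
  have hpi : (0 : ℝ) ≤ Real.pi / 2 := by linarith [Real.pi_pos]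
  set g : ℝ → ℝ := fun x => ((d : ℝ) - 1) * Real.sin x ^ (d - 2) * Real.cos x with hg
  have hgcont : Continuous g := by
    exact (continuous_const.mul (continuous_sin.pow _)).mul continuous_cos
  have hval : ∫ x in Set.Icc 0 (Real.pi / 2), g x = 1 := by
    rw [MeasureTheory.integral_Icc_eq_integral_Ioc,
      ← intervalIntegral.integral_of_le hpi]
    have hderiv : ∀ x ∈ Set.uIcc 0 (Real.pi / 2),
        HasDerivAt (fun y => Real.sin y ^ (d - 1)) (g x) x := by
      intro x _
      have h := (Real.hasDerivAt_sin x).pow (d - 1)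
      have hcast : ((d - 1 : ℕ) : ℝ) = (d : ℝ) - 1 := by
        rw [Nat.cast_sub (by omega : 1 ≤ d)]; norm_num
      have hsub : d - 1 - 1 = d - 2 := by omega
      rw [hsub, hcast] at h
      exact h
    rw [intervalIntegral.integral_eq_sub_of_hasDerivAt hderiv
      (hgcont.intervalIntegrable _ _)]
    simp [Real.sin_pi_div_two]
    intro h
    omega
  have hnn : 0 ≤ᵐ[volume.restrict (Set.Icc 0 (Real.pi / 2))] g := by
    refine (ae_restrict_iff' measurableSet_Icc).2 (ae_of_all _ fun x hx => ?_)
    obtain ⟨hx0, hx2⟩ := hx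
    have h1 : (0 : ℝ) ≤ (d : ℝ) - 1 := by
      have : (2 : ℝ) ≤ (d : ℝ) := by exact_mod_cast hd
      linarith
    have h2 : 0 ≤ Real.sin x := Real.sin_nonneg_of_nonneg_of_le_pi hx0
      (by linarith [Real.pi_pos])
    have h3 : 0 ≤ Real.cos x :=
      Real.cos_nonneg_of_mem_Icc ⟨by linarith [Real.pi_pos], hx2⟩
    exact mul_nonneg (mul_nonneg h1 (pow_nonneg h2 _)) h3
  have hint : Integrable g (volume.restrict (Set.Icc 0 (Real.pi / 2))) :=
    hgcont.integrableOn_Icc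
  have : sigmaMeasure d Set.univ
      = ∫⁻ x, ENNReal.ofReal (g x) ∂(volume.restrict (Set.Icc 0 (Real.pi / 2))) := by
    rw [sigmaMeasure, withDensity_apply _ MeasurableSet.univ, Measure.restrict_univ]
  rw [this, ← MeasureTheory.ofReal_integral_eq_lintegral_ofReal hint hnn]
  rw [show ∫ x, g x ∂(volume.restrict (Set.Icc 0 (Real.pi / 2)))
      = ∫ x in Set.Icc 0 (Real.pi / 2), g x from rfl, hval, ENNReal.ofReal_one]


lemma gamma_nonempty (d : ℕ) (hd : 2 ≤ d) :
    (sigmaMeasure d).prod (sigmaMeasure d) ∈ GammaSigmaSigma d := by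
  haveI := sigma_prob d hd
  exact ⟨Measure.fst_prod, Measure.snd_prod⟩

lemma chi_prob {d : ℕ} (hd : 2 ≤ d) {χ : Measure (ℝ × ℝ)}
    (hχ : χ ∈ GammaSigmaSigma d) : IsProbabilityMeasure χ := by
  constructor
  have h := congrArg (fun μ : Measure ℝ => μ Set.univ) hχ.1
  simp only [Measure.map_apply measurable_fst MeasurableSet.univ,
    Set.preimage_univ] at h
  rw [h, (sigma_prob d hd).measure_univ]

lemma chi_ae {d : ℕ} {χ : Measure (ℝ × ℝ)} (hχ : χ ∈ GammaSigmaSigma d) :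
    ∀ᵐ p ∂χ, p.1 ∈ Set.Icc 0 (Real.pi / 2) ∧ p.2 ∈ Set.Icc 0 (Real.pi / 2) := by
  have h1 : χ (Prod.fst ⁻¹' (Set.Icc 0 (Real.pi / 2))ᶜ) = 0 := by
    rw [← Measure.map_apply measurable_fst measurableSet_Icc.compl, hχ.1]
    exact sigma_compl d
  have h2 : χ (Prod.snd ⁻¹' (Set.Icc 0 (Real.pi / 2))ᶜ) = 0 := by
    rw [← Measure.map_apply measurable_snd measurableSet_Icc.compl, hχ.2]
    exact sigma_compl d
  rw [ae_iff]
  refine measure_mono_null (fun p hp => ?_) (measure_union_null h1 h2)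
  simp only [Set.mem_setOf_eq, not_and_or] at hp
  rcases hp with hp | hp
  · exact Or.inl hp
  · exact Or.inr hp

lemma integral_K (d : ℕ) (hd : 2 ≤ d) (lam : ℝ)
    (hlam : ((d : ℝ) + 1) * ballVol d / (4 * ballVol (d - 1)) ≤ lam)
    {χ : Measure (ℝ × ℝ)} (hχ : χ ∈ GammaSigmaSigma d) :
    ∫ p, Kfun d lam p.1 p.2 ∂χ
      = ((d : ℝ) + 1) / 4 * ∫ p, (1 + Real.cos (p.1 + p.2)) ∂χ - lam := by
  haveI := chi_prob hd hχ
  have hae : (fun p : ℝ × ℝ => Kfun d lam p.1 p.2)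
      =ᵐ[χ] fun p => ((d : ℝ) + 1) / 4 * (1 + Real.cos (p.1 + p.2)) - lam :=
    (chi_ae hχ).mono fun p hp => by
      show Kfun d lam p.1 p.2 = _
      rw [Kfun_eq d hd lam hlam p.1 p.2 hp.1 hp.2]
  rw [integral_congr_ae hae]
  have hcont : Continuous fun p : ℝ × ℝ => 1 + Real.cos (p.1 + p.2) := by
    exact continuous_const.add (Real.continuous_cos.comp (continuous_fst.add continuous_snd))
  have hint : Integrable (fun p : ℝ × ℝ => 1 + Real.cos (p.1 + p.2)) χ := by
    refine (integrable_const (2 : ℝ)).mono' hcont.aestronglyMeasurable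
      (ae_of_all _ fun p => ?_)
    rw [Real.norm_eq_abs, abs_le]
    constructor <;>
      nlinarith [Real.neg_one_le_cos (p.1 + p.2), Real.cos_le_one (p.1 + p.2)]
  rw [integral_sub (hint.const_mul _) (integrable_const lam),
    MeasureTheory.integral_const_mul, integral_const]
  simp

end StmtHelpers

theorem stmt19 (d : ℕ) (hd : 2 ≤ d) (lam : ℝ)
    (hlam : ((d : ℝ) + 1) * ballVol d / (4 * ballVol (d - 1)) ≤ lam) :
    sInf {r : ℝ | ∃ χ ∈ GammaSigmaSigma d, r = ∫ p, Kfun d lam p.1 p.2 ∂χ} =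
      mConst d - lam := by
  classical
  set A : ℝ := ((d : ℝ) + 1) / 4 with hA
  have hApos : 0 < A := by positivity
  set S := {r : ℝ | ∃ χ ∈ GammaSigmaSigma d, r = ∫ p, (1 + Real.cos (p.1 + p.2)) ∂χ}
    with hS
  set T := {r : ℝ | ∃ χ ∈ GammaSigmaSigma d, r = ∫ p, Kfun d lam p.1 p.2 ∂χ} with hT
  have hγ := gamma_nonempty d hd
  have hSmem : ∀ r ∈ T, ∃ s ∈ S, r = A * s - lam := by
    rintro r ⟨χ, hχ, rfl⟩
    exact ⟨_, ⟨χ, hχ, rfl⟩, integral_K d hd lam hlam hχ⟩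
  have hTmem : ∀ s ∈ S, A * s - lam ∈ T := by
    rintro s ⟨χ, hχ, rfl⟩
    exact ⟨χ, hχ, (integral_K d hd lam hlam hχ).symm⟩
  have hSnonneg : ∀ s ∈ S, 0 ≤ s := by
    rintro s ⟨χ, hχ, rfl⟩
    refine integral_nonneg fun p => ?_
    simp only [Pi.zero_apply]
    nlinarith [Real.neg_one_le_cos (p.1 + p.2)]
  have hSne : S.Nonempty := ⟨_, ⟨_, hγ, rfl⟩⟩
  have hSbdd : BddBelow S := ⟨0, hSnonneg⟩
  obtain ⟨s₀, hs₀⟩ := hSne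
  have hTne : T.Nonempty := ⟨A * s₀ - lam, hTmem _ hs₀⟩
  have hTbdd : BddBelow T := ⟨-lam, fun r hr => by
    obtain ⟨s, hs, rfl⟩ := hSmem r hr
    nlinarith [hSnonneg s hs]⟩
  have hineq1 : A * sInf S - lam ≤ sInf T := by
    refine le_csInf hTne fun r hr => ?_
    obtain ⟨s, hs, rfl⟩ := hSmem r hr
    have h := csInf_le hSbdd hs
    nlinarith
  have hineq2 : sInf T ≤ A * sInf S - lam := by
    have h1 : (sInf T + lam) / A ≤ sInf S := by
      refine le_csInf ⟨s₀, hs₀⟩ fun s hs => ?_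
      have h2 := csInf_le hTbdd (hTmem s hs)
      rw [div_le_iff₀ hApos]
      nlinarith
    rw [div_le_iff₀ hApos] at h1
    nlinarith
  have hfin : sInf T = A * sInf S - lam := le_antisymm hineq2 hineq1
  rw [hfin]
  unfold mConst
  rw [← hS, ← hA]
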